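/- Every finite dismantlable lattice of nullity k ≥ 1 has at least k + 3 elements. -/

import Mathlib

/-- The cover graph of a poset: vertices are the elements, edges are covering pairs. -/
def coverGraph (α : Type*) [PartialOrder α] : SimpleGraph α where
  Adj x y := x ⋖ y ∨ y ⋖ x
  symm := ⟨fun _ _ h => h.symm⟩
  loopless := ⟨fun x h => by rcases h with h | h <;> exact h.lt.false⟩

/-- The nullity of a (finite) poset: `m - n + c` where `m` is the number of edges,
`n` the number of vertices and `c` the number of connected components of the cover graph. -/
noncomputable def nullity (α : Type*) [PartialOrder α] : ℤ :=
  (Nat.card (coverGraph α).edgeSet : ℤ) - (Nat.card α : ℤ)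
    + (Nat.card (coverGraph α).ConnectedComponent : ℤ)

/-- A subset of a lattice closed under meets and joins (a sublattice). -/
def IsSublatticeSet {α : Type*} [Lattice α] (s : Set α) : Prop :=
  ∀ x ∈ s, ∀ y ∈ s, x ⊓ y ∈ s ∧ x ⊔ y ∈ s

/-- A finite lattice of order `n` is dismantlable if there is a chain
`L₁ ⊂ L₂ ⊂ ⋯ ⊂ Lₙ = L` of sublattices with `|Lᵢ| = i`. -/
def Dismantlable (α : Type*) [Lattice α] [Fintype α] : Prop :=
  ∃ f : ℕ → Set α,
    (∀ i, 1 ≤ i → i ≤ Fintype.card α → (f i).ncard = i ∧ IsSublatticeSet (f i)) ∧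
    (∀ i, 1 ≤ i → i < Fintype.card α → f i ⊆ f (i + 1)) ∧
    f (Fintype.card α) = Set.univ

section Helpers

lemma coverGraph_noTriangle {α : Type*} [PartialOrder α] {a b c : α}
    (h1 : (coverGraph α).Adj a b) (h2 : (coverGraph α).Adj a c)
    (h3 : (coverGraph α).Adj b c) : False := by
  rcases h1 with h1 | h1 <;> rcases h2 with h2 | h2 <;> rcases h3 with h3 | h3 <;>
    first
      | exact h2.2 h1.lt h3.lt
      | exact h1.2 h2.lt h3.lt
      | exact h3.2 h2.lt h1.lt
      | exact h3.2 h1.lt h2.lt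
      | exact h1.2 h3.lt h2.lt
      | exact h2.2 h3.lt h1.lt
      | exact (h2.lt.trans (h1.lt.trans h3.lt)).false
      | exact (h2.lt.trans (h3.lt.trans h1.lt)).false

lemma unique_lower {α : Type*} [Lattice α] {x : α} (hs : IsSublatticeSet {x}ᶜ)
    {a b : α} (ha : a ⋖ x) (hb : b ⋖ x) : a = b := by
  by_contra hne
  have ha' : a ∈ ({x}ᶜ : Set α) := by simp [ha.lt.ne]
  have hb' : b ∈ ({x}ᶜ : Set α) := by simp [hb.lt.ne]
  have hsup : a ⊔ b ∈ ({x}ᶜ : Set α) := (hs a ha' b hb').2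
  have hle : a ⊔ b ≤ x := sup_le ha.lt.le hb.lt.le
  rcases ha.eq_or_eq le_sup_left hle with h | h
  · have hba : b < a := lt_of_le_of_ne (le_sup_right.trans h.le) (Ne.symm hne)
    exact hb.2 hba ha.lt
  · exact hsup (by simp [h])

lemma unique_upper {α : Type*} [Lattice α] {x : α} (hs : IsSublatticeSet {x}ᶜ)
    {a b : α} (ha : x ⋖ a) (hb : x ⋖ b) : a = b := by
  by_contra hne
  have ha' : a ∈ ({x}ᶜ : Set α) := by simp [ha.lt.ne']
  have hb' : b ∈ ({x}ᶜ : Set α) := by simp [hb.lt.ne']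
  have hinf : a ⊓ b ∈ ({x}ᶜ : Set α) := (hs a ha' b hb').1
  have hle : x ≤ a ⊓ b := le_inf ha.lt.le hb.lt.le
  rcases ha.eq_or_eq hle inf_le_left with h | h
  · exact hinf (by simp [h])
  · have hab : a < b := lt_of_le_of_ne (h ▸ inf_le_right) hne
    exact hb.2 ha.lt hab

lemma covBy_coe {α : Type*} [PartialOrder α] {s : Set α} {a b : ↥s}
    (h : (a : α) ⋖ (b : α)) : a ⋖ b :=
  ⟨Subtype.coe_lt_coe.mp h.lt,
   fun c h1 h2 => h.2 (Subtype.coe_lt_coe.mpr h1) (Subtype.coe_lt_coe.mpr h2)⟩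

/-- A sublattice set inherits a lattice structure (with the subtype order). -/
def setLattice {α : Type*} [Lattice α] (s : Set α) (hs : IsSublatticeSet s) : Lattice ↥s :=
  { (inferInstance : PartialOrder ↥s) with
    sup := fun a b => ⟨↑a ⊔ ↑b, (hs _ a.2 _ b.2).2⟩
    inf := fun a b => ⟨↑a ⊓ ↑b, (hs _ a.2 _ b.2).1⟩
    le_sup_left := fun a b => (le_sup_left : (a : α) ≤ ↑a ⊔ ↑b)
    le_sup_right := fun a b => (le_sup_right : (b : α) ≤ ↑a ⊔ ↑b)
    sup_le := fun a b c h1 h2 => (sup_le h1 h2 : (a : α) ⊔ ↑b ≤ ↑c)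
    inf_le_left := fun a b => (inf_le_left : (a : α) ⊓ ↑b ≤ ↑a)
    inf_le_right := fun a b => (inf_le_right : (a : α) ⊓ ↑b ≤ ↑b)
    le_inf := fun a b c h1 h2 => (le_inf h1 h2 : (a : α) ≤ ↑b ⊓ ↑c) }

lemma coverGraph_connected (α : Type*) [Lattice α] [Fintype α] [Nonempty α] :
    (coverGraph α).Connected := by
  classical
  obtain ⟨b, -, hbmin⟩ : ∃ b ∈ (Finset.univ : Finset α), ∀ y ∈ (Finset.univ : Finset α), ¬ y < b := by
    obtain ⟨b, hb⟩ := Finset.exists_minimal (s := (Finset.univ : Finset α))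
      ⟨Classical.arbitrary α, Finset.mem_univ _⟩
    exact ⟨b, hb.1, fun y hy hlt => hlt.not_ge (hb.2 hy hlt.le)⟩
  have hbot : ∀ y : α, b ≤ y := by
    intro y
    rcases lt_or_eq_of_le (inf_le_left : b ⊓ y ≤ b) with h | h
    · exact absurd h (hbmin _ (Finset.mem_univ _))
    · exact h ▸ inf_le_right
  have hreach : ∀ x : α, (coverGraph α).Reachable b x := by
    intro x
    induction x using WellFoundedLT.induction with
    | ind x ih =>
      rcases eq_or_lt_of_le (hbot x) with h | h
      · exact h ▸ SimpleGraph.Reachable.refl b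
      · have hne : (Finset.univ.filter (· < x)).Nonempty := ⟨b, by simp [h]⟩
        obtain ⟨m, hm, hmax⟩ : ∃ m ∈ Finset.univ.filter (· < x), ∀ c ∈ Finset.univ.filter (· < x), ¬ m < c := by
          obtain ⟨m, hm⟩ := Finset.exists_maximal hne
          exact ⟨m, hm.1, fun c hc hlt => hlt.not_ge (hm.2 hc hlt.le)⟩
        rw [Finset.mem_filter] at hm
        have hcov : m ⋖ x := ⟨hm.2, fun c hmc hcx => hmax c (by simp [hcx]) hmc⟩
        exact (ih m hm.2).trans (SimpleGraph.Adj.reachable (Or.inl hcov))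
  exact ⟨fun x y => (hreach x).symm.trans (hreach y)⟩

lemma coverGraph_components (α : Type*) [Lattice α] [Fintype α] [Nonempty α] :
    Nat.card (coverGraph α).ConnectedComponent = 1 := by
  have hc := coverGraph_connected α
  have : Subsingleton (coverGraph α).ConnectedComponent := by
    constructor
    refine SimpleGraph.ConnectedComponent.ind₂ (fun a b => ?_)
    exact SimpleGraph.ConnectedComponent.sound (hc.preconnected a b)
  rw [Nat.card_eq_one_iff_unique]
  exact ⟨this, ⟨(coverGraph α).connectedComponentMk (Classical.arbitrary α)⟩⟩

lemma edge_card_le {α : Type*} [Lattice α] [Fintype α] {x : α}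
    (hs : IsSublatticeSet {x}ᶜ) (hne : ({x}ᶜ : Set α).Nonempty) :
    Nat.card (coverGraph α).edgeSet ≤
      Nat.card (coverGraph ↥({x}ᶜ : Set α)).edgeSet + 2 := by
  classical
  set s : Set α := {x}ᶜ with hsdef
  obtain ⟨y0, hy0⟩ := hne
  set ι : α → ↥s := fun y => if h : y ∈ s then ⟨y, h⟩ else ⟨y0, hy0⟩ with hι
  have hιcoe : ∀ y ∈ s, (ι y : α) = y := by
    intro y hy; simp [hι, hy]
  have hmem_s : ∀ y : α, y ≠ x → y ∈ s := by
    intro y hy; simp [hsdef, hy]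
  have hmaps : ∀ e : Sym2 α, e ∈ (coverGraph α).edgeSet → x ∉ e →
      Sym2.map ι e ∈ (coverGraph ↥s).edgeSet := by
    intro e he hxe
    induction e using Sym2.ind with
    | _ a b =>
      rw [Sym2.map_pair_eq]
      rw [SimpleGraph.mem_edgeSet] at he ⊢
      have hax : a ≠ x := fun h => hxe (by simp [h])
      have hbx : b ≠ x := fun h => hxe (by simp [h])
      have ha : a ∈ s := hmem_s a hax
      have hb : b ∈ s := hmem_s b hbx
      rcases he with h | h
      · exact Or.inl (covBy_coe (by rwa [hιcoe a ha, hιcoe b hb]))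
      · exact Or.inr (covBy_coe (by rwa [hιcoe a ha, hιcoe b hb]))
  have hfix : ∀ e : Sym2 α, x ∉ e → Sym2.map (Subtype.val ∘ ι) e = e := by
    intro e hxe
    induction e using Sym2.ind with
    | _ a b =>
      rw [Sym2.map_pair_eq]
      have ha : a ∈ s := hmem_s a (fun h => hxe (by simp [h]))
      have hb : b ∈ s := hmem_s b (fun h => hxe (by simp [h]))
      simp only [Function.comp_apply, hιcoe a ha, hιcoe b hb]
  set F : (coverGraph α).edgeSet → (coverGraph ↥s).edgeSet ⊕ Fin 2 := fun e =>
    if h : x ∈ (e : Sym2 α) then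
      Sum.inr (if Sym2.Mem.other h ⋖ x then 0 else 1)
    else
      Sum.inl ⟨Sym2.map ι (e : Sym2 α), hmaps _ e.2 h⟩ with hF
  have hadj : ∀ (e : (coverGraph α).edgeSet) (h : x ∈ (e : Sym2 α)),
      (coverGraph α).Adj x (Sym2.Mem.other h) := by
    intro e h
    have := e.2
    rw [← Sym2.other_spec h, SimpleGraph.mem_edgeSet] at this
    exact this
  have hinj : Function.Injective F := by
    rintro ⟨e1, he1⟩ ⟨e2, he2⟩ h12
    simp only [Subtype.mk.injEq]
    simp only [hF] at h12
    by_cases hx1 : x ∈ e1 <;> by_cases hx2 : x ∈ e2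
    · rw [dif_pos hx1, dif_pos hx2, Sum.inr.injEq] at h12
      have ha1 := hadj ⟨e1, he1⟩ hx1
      have ha2 := hadj ⟨e2, he2⟩ hx2
      have key : Sym2.Mem.other hx1 = Sym2.Mem.other hx2 := by
        by_cases hc1 : Sym2.Mem.other hx1 ⋖ x <;> by_cases hc2 : Sym2.Mem.other hx2 ⋖ x <;>
          simp only [if_pos, if_neg, hc1, hc2, if_true, if_false] at h12
        · exact unique_lower hs hc1 hc2
        · exact absurd h12 (by decide)
        · exact absurd h12 (by decide)
        · have hu1 : x ⋖ Sym2.Mem.other hx1 := ha1.resolve_right hc1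
          have hu2 : x ⋖ Sym2.Mem.other hx2 := ha2.resolve_right hc2
          exact unique_upper hs hu1 hu2
      rw [← Sym2.other_spec hx1, ← Sym2.other_spec hx2, key]
    · rw [dif_pos hx1, dif_neg hx2] at h12
      exact absurd h12 (by simp)
    · rw [dif_neg hx1, dif_pos hx2] at h12
      exact absurd h12 (by simp)
    · rw [dif_neg hx1, dif_neg hx2, Sum.inl.injEq, Subtype.mk.injEq] at h12
      have := congrArg (Sym2.map (Subtype.val : ↥s → α)) h12
      rwa [Sym2.map_map, Sym2.map_map, hfix e1 hx1, hfix e2 hx2] at this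
  calc Nat.card (coverGraph α).edgeSet
      ≤ Nat.card ((coverGraph ↥s).edgeSet ⊕ Fin 2) :=
        Nat.card_le_card_of_injective F hinj
    _ = Nat.card (coverGraph ↥s).edgeSet + 2 := by
        rw [Nat.card_sum]; simp [Nat.card_eq_fintype_card]

lemma edges_le_two {α : Type*} [PartialOrder α] [Fintype α] (h3 : Fintype.card α = 3) :
    Nat.card (coverGraph α).edgeSet ≤ 2 := by
  classical
  obtain ⟨a, b, c, hab, hac, hbc, huniv⟩ :=
    Finset.card_eq_three.mp (by rw [Finset.card_univ, h3] : (Finset.univ : Finset α).card = 3)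
  by_contra hgt
  push_neg at hgt
  set T : Finset (Sym2 α) := {s(a,b), s(a,c), s(b,c)} with hT
  have hmem3 : ∀ u : α, u = a ∨ u = b ∨ u = c := by
    intro u
    have : u ∈ ({a, b, c} : Finset α) := huniv ▸ Finset.mem_univ u
    simpa using this
  have hsub : (coverGraph α).edgeFinset ⊆ T := by
    intro e he
    rw [SimpleGraph.mem_edgeFinset] at he
    induction e using Sym2.ind with
    | _ u v =>
      rw [SimpleGraph.mem_edgeSet] at he
      have hne : u ≠ v := (coverGraph α).ne_of_adj he
      rcases hmem3 u with hu | hu | hu <;> rcases hmem3 v with hv | hv | hv <;>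
        subst hu <;> subst hv <;>
        first
          | exact absurd rfl hne
          | simp [hT]
          | (rw [Sym2.eq_swap]; simp [hT])
  have hcard : 3 ≤ (coverGraph α).edgeFinset.card := by
    rwa [SimpleGraph.edgeFinset_card, ← Nat.card_eq_fintype_card]
  have hTcard : T.card ≤ 3 :=
    (Finset.card_insert_le _ _).trans (Nat.succ_le_succ
      ((Finset.card_insert_le _ _).trans (Nat.succ_le_succ (Finset.card_singleton _).le)))
  have heq : (coverGraph α).edgeFinset = T :=
    Finset.eq_of_subset_of_card_le hsub (hTcard.trans hcard)
  have hadj : ∀ p ∈ T, p ∈ (coverGraph α).edgeFinset := by rw [heq]; exact fun p hp => hp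
  have h1 : (coverGraph α).Adj a b := by
    have := hadj s(a,b) (by simp [hT])
    rwa [SimpleGraph.mem_edgeFinset, SimpleGraph.mem_edgeSet] at this
  have h2 : (coverGraph α).Adj a c := by
    have := hadj s(a,c) (by simp [hT])
    rwa [SimpleGraph.mem_edgeFinset, SimpleGraph.mem_edgeSet] at this
  have h3' : (coverGraph α).Adj b c := by
    have := hadj s(b,c) (by simp [hT])
    rwa [SimpleGraph.mem_edgeFinset, SimpleGraph.mem_edgeSet] at this
  exact coverGraph_noTriangle h1 h2 h3'

lemma chain_subset {α : Type*} (f : ℕ → Set α) (N : ℕ)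
    (hchain : ∀ i, 1 ≤ i → i < N → f i ⊆ f (i + 1)) :
    ∀ i j, 1 ≤ i → i ≤ j → j ≤ N → f i ⊆ f j := by
  intro i j hi hij hj
  induction j with
  | zero => omega
  | succ j ih =>
    rcases eq_or_lt_of_le hij with h | h
    · exact h ▸ subset_rfl
    · exact (ih (by omega) (by omega)).trans (hchain j (by omega) (by omega))

end Helpers

universe u

lemma main_bound : ∀ n : ℕ, 3 ≤ n → ∀ (α : Type u) (instL : Lattice α) (instF : Fintype α),
    Fintype.card α = n → Dismantlable α → Nat.card (coverGraph α).edgeSet + 4 ≤ 2 * n := by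
  intro n
  induction n using Nat.strong_induction_on with
  | _ n ih =>
    intro h3 α instL instF hcard hd
    rcases eq_or_lt_of_le h3 with hn3 | hn4
    · have := edges_le_two (α := α) (by omega)
      omega
    · -- n ≥ 4
      obtain ⟨f, hprop, hchain, htop⟩ := hd
      rw [hcard] at hprop hchain htop
      obtain ⟨hcard_s, hs_sub⟩ := hprop (n - 1) (by omega) (by omega)
      have hfinS : (f (n-1)).Finite := Set.toFinite _
      have hcompl_card : (f (n-1))ᶜ.ncard = 1 := by
        have h := Set.ncard_add_ncard_compl (f (n-1))
        rw [Nat.card_eq_fintype_card, hcard] at h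
        omega
      obtain ⟨x, hx⟩ := Set.ncard_eq_one.mp hcompl_card
      have hsx : f (n-1) = {x}ᶜ := by rw [← compl_compl (f (n-1)), hx]
      have hs_sub' : IsSublatticeSet ({x}ᶜ : Set α) := hsx ▸ hs_sub
      have hne : ({x}ᶜ : Set α).Nonempty := by
        rw [← hsx]; exact Set.nonempty_of_ncard_ne_zero (by omega)
      have h1 : Nat.card (coverGraph α).edgeSet ≤
          Nat.card (coverGraph ↥({x}ᶜ : Set α)).edgeSet + 2 := edge_card_le hs_sub' hne
      letI instLS : Lattice ↥({x}ᶜ : Set α) := setLattice _ hs_sub'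
      haveI instFS : Fintype ↥({x}ᶜ : Set α) := Fintype.ofFinite _
      have hcards : Fintype.card ↥({x}ᶜ : Set α) = n - 1 := by
        rw [← Nat.card_eq_fintype_card, Nat.card_coe_set_eq, ← hsx]
        exact hcard_s
      have hdis : Dismantlable ↥({x}ᶜ : Set α) := by
        refine ⟨fun i => Subtype.val ⁻¹' f i, ?_, ?_, ?_⟩
        · intro i h1i hin
          rw [hcards] at hin
          have hfi := hprop i h1i (by omega)
          have hsubi : f i ⊆ ({x}ᶜ : Set α) := by
            rw [← hsx]
            exact chain_subset f n hchain i (n-1) h1i hin (by omega)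
          constructor
          · show (Subtype.val ⁻¹' f i).ncard = i
            exact (Set.ncard_preimage_of_injective_subset_range Subtype.val_injective
              (by rw [Subtype.range_val]; exact hsubi)).trans hfi.1
          · intro u hu v hv
            exact ⟨(hfi.2 ↑u hu ↑v hv).1, (hfi.2 ↑u hu ↑v hv).2⟩
        · intro i h1i hin
          rw [hcards] at hin
          exact fun u hu => hchain i h1i (by omega) hu
        · show Subtype.val ⁻¹' f (Fintype.card ↥({x}ᶜ : Set α)) = Set.univ
          rw [hcards, hsx]
          exact Subtype.coe_preimage_self _
      have h2 := ih (n - 1) (by omega) (by omega) ↥({x}ᶜ : Set α) instLS instFS hcards hdis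
      have h2' : Nat.card (@coverGraph ↥({x}ᶜ : Set α) (Subtype.partialOrder _)).edgeSet + 4 ≤
          2 * (n - 1) := h2
      omega

/-- Every finite dismantlable lattice of nullity `k ≥ 1` has at least `k + 3` elements. -/
theorem stmt11 {α : Type*} [Lattice α] [Fintype α] [Nonempty α]
    (hd : Dismantlable α) (k : ℕ) (hk : 1 ≤ k) (hnull : nullity α = (k : ℤ)) :
    k + 3 ≤ Fintype.card α := by
  classical
  have hcomp := coverGraph_components α
  have hnull' : (Nat.card (coverGraph α).edgeSet : ℤ) - (Fintype.card α : ℤ) + 1 = (k : ℤ) := by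
    rw [nullity, hcomp,
      show (Nat.card α) = Fintype.card α from Nat.card_eq_fintype_card] at hnull
    push_cast at hnull ⊢
    linarith
  haveI : Fintype (coverGraph α).edgeSet := Fintype.ofFinite _
  have hm_le : Nat.card (coverGraph α).edgeSet ≤ (Fintype.card α).choose 2 := by
    rw [Nat.card_eq_fintype_card, ← SimpleGraph.edgeFinset_card]
    exact SimpleGraph.card_edgeFinset_le_card_choose_two
  have hn1 : 1 ≤ Fintype.card α := Fintype.card_pos
  have hn3 : 3 ≤ Fintype.card α := by
    by_contra h
    push_neg at h
    have h12 : Fintype.card α = 1 ∨ Fintype.card α = 2 := by omega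
    have hmm : Nat.card (coverGraph α).edgeSet = Fintype.card (coverGraph α).edgeSet :=
      Nat.card_eq_fintype_card
    have hc1 : (1 : ℕ).choose 2 = 0 := rfl
    have hc2 : (2 : ℕ).choose 2 = 1 := rfl
    rcases h12 with h | h <;> rw [h] at hm_le hnull' <;> simp only [hc1, hc2] at hm_le <;> omega
  have hb := main_bound (Fintype.card α) hn3 α _ _ rfl hd
  omega
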